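/- For every integer n ≥ 1, every b ∈ (0,1], and every x > 0, the function φ_{n,b} is strictly positive and satisfies 0 < φ_{n,b}(x) ≤ 2π·e^{−(1−b)x}. -/

import Mathlib

open MeasureTheory Real Set Filter Polynomial Topology

noncomputable section

namespace DCV5

/-- The universal function `φ_{n,b}(x) = ∫_0^{2π} e^{−x·√(1+b²−2b·cos η)} cos(nη) dη`. -/
def phib (n : ℕ) (b x : ℝ) : ℝ :=
  ∫ η in (0:ℝ)..(2*π), Real.exp (-x * Real.sqrt (1 + b^2 - 2*b*Real.cos η)) * Real.cos (n*η)


def SS (b t : ℝ) : ℝ := Real.sqrt (1 + b^2 - 2*b*t)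

def QQ (b x : ℝ) : ℕ → Polynomial ℝ
  | 0 => 1
  | k+1 => Polynomial.C b * (Polynomial.C x * Polynomial.X * QQ b x k
      + Polynomial.X^3 * Polynomial.derivative (QQ b x k))

def HH (b x : ℝ) (k : ℕ) (t : ℝ) : ℝ :=
  Real.exp (-x * SS b t) * (QQ b x k).eval (SS b t)⁻¹

lemma eval_nonneg_of_coeff {p : Polynomial ℝ} (hp : ∀ i, 0 ≤ p.coeff i) {w : ℝ}
    (hw : 0 ≤ w) : 0 ≤ p.eval w := by
  rw [Polynomial.eval_eq_sum_range]
  exact Finset.sum_nonneg fun i _ => mul_nonneg (hp i) (pow_nonneg hw i)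

lemma QQ_coeff_nonneg {b x : ℝ} (hb : 0 ≤ b) (hx : 0 ≤ x) (k : ℕ) :
    ∀ i, 0 ≤ (QQ b x k).coeff i := by
  induction k with
  | zero => intro i; simp only [QQ, Polynomial.coeff_one]; split <;> norm_num
  | succ k ih =>
    intro i
    have e1 : Polynomial.C x * Polynomial.X * QQ b x k = Polynomial.C x * QQ b x k * Polynomial.X^1 := by ring
    have e2 : Polynomial.X^3 * Polynomial.derivative (QQ b x k)
        = Polynomial.derivative (QQ b x k) * Polynomial.X^3 := by ring
    simp only [QQ, Polynomial.coeff_C_mul, Polynomial.coeff_add, e1, e2,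
      Polynomial.coeff_mul_X_pow']
    refine mul_nonneg hb (add_nonneg ?_ ?_)
    · split
      · exact mul_nonneg hx (ih _)
      · exact le_refl _
    · split
      · simp only [Polynomial.coeff_derivative]
        exact mul_nonneg (ih _) (by positivity)
      · exact le_refl _


lemma QQ_eval_pos {b x : ℝ} (hb : 0 < b) (hx : 0 < x) (k : ℕ) {w : ℝ} (hw : 0 < w) :
    0 < (QQ b x k).eval w := by
  induction k with
  | zero => simp [QQ]
  | succ k ih =>
    simp only [QQ, Polynomial.eval_mul, Polynomial.eval_C, Polynomial.eval_add,
      Polynomial.eval_X, Polynomial.eval_pow]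
    have h1 : 0 ≤ (Polynomial.derivative (QQ b x k)).eval w := by
      refine eval_nonneg_of_coeff (fun i => ?_) hw.le
      rw [Polynomial.coeff_derivative]
      exact mul_nonneg (QQ_coeff_nonneg hb.le hx.le k _) (by positivity)
    have h2 : 0 ≤ w ^ 3 * (Polynomial.derivative (QQ b x k)).eval w :=
      mul_nonneg (by positivity) h1
    have h3 : 0 < x * w * (QQ b x k).eval w := by positivity
    exact mul_pos hb (by linarith)

lemma arg_pos {b t : ℝ} (hb : 0 < b) (hb1 : b ≤ 1) (ht : t < 1) :
    0 < 1 + b^2 - 2*b*t := by nlinarith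

lemma SS_pos {b t : ℝ} (hb : 0 < b) (hb1 : b ≤ 1) (ht : t < 1) : 0 < SS b t :=
  Real.sqrt_pos.mpr (arg_pos hb hb1 ht)

lemma HH_pos {b x : ℝ} (hb : 0 < b) (hb1 : b ≤ 1) (hx : 0 < x) (k : ℕ) {t : ℝ}
    (ht : t < 1) : 0 < HH b x k t := by
  have hs := SS_pos hb hb1 ht
  exact mul_pos (Real.exp_pos _) (QQ_eval_pos hb hx k (by positivity))

lemma hasDerivAt_SS {b x t : ℝ} (hb : 0 < b) (hb1 : b ≤ 1) (ht : t < 1) :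
    HasDerivAt (SS b) (-b * (SS b t)⁻¹) t := by
  have h0 := arg_pos hb hb1 ht
  have h1 : HasDerivAt (fun s : ℝ => 1 + b^2 - 2*b*s) (-(2*b)) t := by
    simpa using ((hasDerivAt_id t).const_mul (2*b)).const_sub (1 + b^2)
  have h2 := (Real.hasDerivAt_sqrt h0.ne').comp t h1
  have hs : Real.sqrt (1 + b^2 - 2*b*t) ≠ 0 := by positivity
  have heq : -b * (SS b t)⁻¹ = 1 / (2 * Real.sqrt (1 + b^2 - 2*b*t)) * -(2*b) := by
    unfold SS
    field_simp
  rw [heq]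
  exact h2

lemma hasDerivAt_HH {b x t : ℝ} (hb : 0 < b) (hb1 : b ≤ 1) (hx : 0 < x) (k : ℕ)
    (ht : t < 1) : HasDerivAt (HH b x k) (HH b x (k+1) t) t := by
  have hs := SS_pos hb hb1 ht
  have hS := hasDerivAt_SS (x := x) hb hb1 ht
  have hexp : HasDerivAt (fun s => Real.exp (-x * SS b s))
      (Real.exp (-x * SS b t) * (-x * (-b * (SS b t)⁻¹))) t :=
    ((hS.const_mul (-x)).exp)
  have hinv : HasDerivAt (fun s => (SS b s)⁻¹) (-(-b * (SS b t)⁻¹) / SS b t ^ 2) t :=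
    hS.inv hs.ne'
  have hpoly : HasDerivAt (fun s => (QQ b x k).eval (SS b s)⁻¹)
      ((Polynomial.derivative (QQ b x k)).eval (SS b t)⁻¹ * (-(-b * (SS b t)⁻¹) / SS b t ^ 2)) t :=
    (Polynomial.hasDerivAt (QQ b x k) _).comp t hinv
  have hmul := hexp.mul hpoly
  have hQ : QQ b x (k+1) = Polynomial.C b * (Polynomial.C x * Polynomial.X * QQ b x k
      + Polynomial.X^3 * Polynomial.derivative (QQ b x k)) := rfl
  have hD : Real.exp (-x * SS b t) * (-x * (-b * (SS b t)⁻¹)) * (QQ b x k).eval (SS b t)⁻¹ +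
      Real.exp (-x * SS b t) *
        ((Polynomial.derivative (QQ b x k)).eval (SS b t)⁻¹ * (-(-b * (SS b t)⁻¹) / SS b t ^ 2))
      = HH b x (k+1) t := by
    unfold HH
    rw [hQ]
    simp only [Polynomial.eval_mul, Polynomial.eval_C, Polynomial.eval_add,
      Polynomial.eval_X, Polynomial.eval_pow]
    field_simp
  exact hD ▸ hmul



/-- Generic: a chain of derivatives gives iterated derivatives within an interval. -/
lemma iteratedDerivWithin_eq_chain {F : ℕ → ℝ → ℝ} {u v : ℝ} (huv : u < v)
    (hF : ∀ j, ∀ t ∈ Set.Icc u v, HasDerivAt (F j) (F (j+1) t) t) :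
    ∀ j, ∀ t ∈ Set.Icc u v, iteratedDerivWithin j (F 0) (Set.Icc u v) t = F j t := by
  intro j
  induction j with
  | zero => intro t ht; simp
  | succ j ih =>
    intro t ht
    rw [iteratedDerivWithin_succ]
    rw [derivWithin_congr ih (ih t ht)]
    exact ((hF j t ht).hasDerivWithinAt).derivWithin (uniqueDiffOn_Icc huv t ht)

/-- Generic: a chain of derivatives on an open set gives smoothness. -/
lemma contDiffOn_chain {F : ℕ → ℝ → ℝ} {s : Set ℝ} (hs : IsOpen s)
    (hF : ∀ j, ∀ t ∈ s, HasDerivAt (F j) (F (j+1) t) t) :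
    ∀ (K : ℕ) (k : ℕ), ContDiffOn ℝ K (F k) s := by
  intro K
  induction K with
  | zero =>
    intro k
    rw [Nat.cast_zero, contDiffOn_zero]
    exact fun t ht => ((hF k t ht).differentiableAt.continuousAt).continuousWithinAt
  | succ K ih =>
    intro k
    rw [Nat.cast_succ]
    rw [contDiffOn_succ_iff_derivWithin hs.uniqueDiffOn]
    refine ⟨fun t ht => ((hF k t ht).differentiableAt).differentiableWithinAt, ?_, ?_⟩
    · intro h; exact absurd h (by norm_num)
    · refine (ih (k+1)).congr fun t ht => ?_
      rw [derivWithin_of_isOpen hs ht]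
      exact ((hF k t ht).deriv).symm ▸ rfl



lemma taylor_chain_lagrange {F : ℕ → ℝ → ℝ} {a c u v : ℝ} (hau : a < u) (huv : u < v)
    (hvc : v < c)
    (hF : ∀ j, ∀ t ∈ Set.Ioo a c, HasDerivAt (F j) (F (j+1) t) t) (K : ℕ) :
    ∃ ξ ∈ Set.Ioo u v, F 0 v - ∑ j ∈ Finset.range (K+1), F j u * (v-u)^j / j.factorial
      = F (K+1) ξ * (v-u)^(K+1) / (K+1).factorial := by
  have hsub : Set.Icc u v ⊆ Set.Ioo a c :=
    fun t ht => ⟨lt_of_lt_of_le hau ht.1, lt_of_le_of_lt ht.2 hvc⟩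
  have hchain : ∀ j, ∀ t ∈ Set.Icc u v, HasDerivAt (F j) (F (j+1) t) t :=
    fun j t ht => hF j t (hsub ht)
  have hcd : ContDiffOn ℝ K (F 0) (Set.Icc u v) :=
    (contDiffOn_chain isOpen_Ioo hF K 0).mono hsub
  have hdiff : DifferentiableOn ℝ (iteratedDerivWithin K (F 0) (Set.Icc u v)) (Set.Ioo u v) := by
    refine DifferentiableOn.congr (f := F K) ?_ ?_
    · exact fun t ht => ((hchain K t (Set.Ioo_subset_Icc_self ht)).differentiableAt).differentiableWithinAt
    · exact fun t ht => iteratedDerivWithin_eq_chain huv hchain K t (Set.Ioo_subset_Icc_self ht)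
  obtain ⟨ξ, hξ, heq⟩ := taylor_mean_remainder_lagrange huv.ne
    (by rwa [Set.uIcc_of_le huv.le]) (by rwa [Set.uIcc_of_le huv.le, Set.uIoo_of_le huv.le])
  rw [Set.uIoo_of_le huv.le] at hξ
  rw [Set.uIcc_of_le huv.le] at heq
  refine ⟨ξ, hξ, ?_⟩
  rw [taylor_within_apply] at heq
  rw [iteratedDerivWithin_eq_chain huv hchain (K+1) ξ (Set.Ioo_subset_Icc_self hξ)] at heq
  rw [← heq]
  congr 1
  refine Finset.sum_congr rfl fun j hj => ?_
  rw [iteratedDerivWithin_eq_chain huv hchain j u ⟨le_refl u, huv.le⟩]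
  simp [smul_eq_mul]
  ring

lemma taylor_chain_cauchy {F : ℕ → ℝ → ℝ} {a c u v : ℝ} (hau : a < u) (huv : u < v)
    (hvc : v < c)
    (hF : ∀ j, ∀ t ∈ Set.Ioo a c, HasDerivAt (F j) (F (j+1) t) t) (K : ℕ) :
    ∃ ξ ∈ Set.Ioo u v, F 0 v - ∑ j ∈ Finset.range (K+1), F j u * (v-u)^j / j.factorial
      = F (K+1) ξ * (v-ξ)^K / K.factorial * (v-u) := by
  have hsub : Set.Icc u v ⊆ Set.Ioo a c :=
    fun t ht => ⟨lt_of_lt_of_le hau ht.1, lt_of_le_of_lt ht.2 hvc⟩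
  have hchain : ∀ j, ∀ t ∈ Set.Icc u v, HasDerivAt (F j) (F (j+1) t) t :=
    fun j t ht => hF j t (hsub ht)
  have hcd : ContDiffOn ℝ K (F 0) (Set.Icc u v) :=
    (contDiffOn_chain isOpen_Ioo hF K 0).mono hsub
  have hdiff : DifferentiableOn ℝ (iteratedDerivWithin K (F 0) (Set.Icc u v)) (Set.Ioo u v) := by
    refine DifferentiableOn.congr (f := F K) ?_ ?_
    · exact fun t ht => ((hchain K t (Set.Ioo_subset_Icc_self ht)).differentiableAt).differentiableWithinAt
    · exact fun t ht => iteratedDerivWithin_eq_chain huv hchain K t (Set.Ioo_subset_Icc_self ht)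
  obtain ⟨ξ, hξ, heq⟩ := taylor_mean_remainder_cauchy huv.ne
    (by rwa [Set.uIcc_of_le huv.le]) (by rwa [Set.uIcc_of_le huv.le, Set.uIoo_of_le huv.le])
  rw [Set.uIoo_of_le huv.le] at hξ
  rw [Set.uIcc_of_le huv.le] at heq
  refine ⟨ξ, hξ, ?_⟩
  rw [taylor_within_apply] at heq
  rw [iteratedDerivWithin_eq_chain huv hchain (K+1) ξ (Set.Ioo_subset_Icc_self hξ)] at heq
  rw [← heq]
  congr 1
  refine Finset.sum_congr rfl fun j hj => ?_
  rw [iteratedDerivWithin_eq_chain huv hchain j u ⟨le_refl u, huv.le⟩]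
  simp [smul_eq_mul]
  ring



lemma HH_chain {b x : ℝ} (hb : 0 < b) (hb1 : b ≤ 1) (hx : 0 < x) :
    ∀ j, ∀ t ∈ Set.Ioo (-2:ℝ) 1, HasDerivAt (HH b x j) (HH b x (j+1) t) t :=
  fun j t ht => hasDerivAt_HH hb hb1 hx j ht.2

lemma HH_taylor_le {b x : ℝ} (hb : 0 < b) (hb1 : b ≤ 1) (hx : 0 < x)
    {u v : ℝ} (hu : -2 < u) (huv : u < v) (hv : v < 1) (K : ℕ) :
    ∑ j ∈ Finset.range (K+1), HH b x j u * (v-u)^j / j.factorial ≤ HH b x 0 v := by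
  obtain ⟨ξ, hξ, heq⟩ := taylor_chain_lagrange hu huv hv (HH_chain hb hb1 hx) K
  have h1 : 0 ≤ HH b x (K+1) ξ * (v-u)^(K+1) / (K+1).factorial := by
    have h2 := HH_pos hb hb1 hx (K+1) (lt_trans hξ.2 hv)
    exact div_nonneg (mul_nonneg h2.le (pow_nonneg (by linarith) _)) (by positivity)
  linarith

lemma HH_term_le {b x : ℝ} (hb : 0 < b) (hb1 : b ≤ 1) (hx : 0 < x)
    {u v : ℝ} (hu : -2 < u) (huv : u < v) (hv : v < 1) (j : ℕ) :
    HH b x j u * (v-u)^j / j.factorial ≤ HH b x 0 v := by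
  refine le_trans ?_ (HH_taylor_le hb hb1 hx hu huv hv j)
  refine Finset.single_le_sum (f := fun i => HH b x i u * (v-u)^i / i.factorial)
    (fun i _ => ?_) (Finset.self_mem_range_succ j)
  have h2 := HH_pos hb hb1 hx i (lt_trans huv hv)
  exact div_nonneg (mul_nonneg h2.le (pow_nonneg (by linarith) _)) (by positivity)

lemma GG_chain {b x : ℝ} (hb : 0 < b) (hb1 : b ≤ 1) (hx : 0 < x) :
    ∀ j, ∀ s ∈ Set.Ioo (-1:ℝ) 2,
      HasDerivAt (fun s => (-1:ℝ)^j * HH b x j (-s)) ((-1:ℝ)^(j+1) * HH b x (j+1) (-(s)) ) s := by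
  intro j s hs
  have h1 : HasDerivAt (fun s : ℝ => HH b x j (-s)) (HH b x (j+1) (-s) * (-1)) s :=
    (hasDerivAt_HH hb hb1 hx j (by linarith [hs.1] : -s < 1)).comp s (hasDerivAt_neg s)
  have h2 := h1.const_mul ((-1:ℝ)^j)
  rw [show (-1:ℝ)^(j+1) * HH b x (j+1) (-s) = (-1:ℝ)^j * (HH b x (j+1) (-s) * -1) by ring]
  exact h2

/-- Convergence of the Taylor series of `HH b x 0` on `(-1,1)`. -/
lemma HH_series {b x : ℝ} (hb : 0 < b) (hb1 : b ≤ 1) (hx : 0 < x)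
    {t : ℝ} (ht : t ∈ Set.Ioo (-1:ℝ) 1) :
    Tendsto (fun K => ∑ j ∈ Finset.range (K+1), HH b x j 0 / j.factorial * t^j) atTop
      (𝓝 (HH b x 0 t)) := by
  have key : Tendsto (fun K => HH b x 0 t
      - ∑ j ∈ Finset.range (K+1), HH b x j 0 / j.factorial * t^j) atTop (𝓝 0) := by
    rcases lt_trichotomy t 0 with ht0 | ht0 | ht0
    · -- t < 0 : reflected Lagrange remainder
      set r : ℝ := (1 + |t|)/2 with hrdef
      have htabs : |t| = -t := abs_of_neg ht0
      have hr1 : r < 1 := by rw [hrdef, htabs]; cases ht; linarith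
      have hr0 : 0 < r := by rw [hrdef]; positivity
      have htr : |t| < r := by rw [hrdef]; cases ht; rw [htabs] at *; linarith
      apply squeeze_zero_norm (a := fun K => HH b x 0 r * (|t|/r)^(K+1))
      · intro K
        obtain ⟨ξ, hξ, heq⟩ := taylor_chain_lagrange (a := (-1:ℝ)) (c := (2:ℝ))
          (by norm_num) (by linarith : (0:ℝ) < -t) (by cases ht; linarith)
          (GG_chain hb hb1 hx) K
        have habs0 : 0 < |t| := abs_pos.mpr (ne_of_lt ht0)
        have hsum : ∀ j : ℕ, (-1:ℝ)^j * HH b x j (-(0:ℝ)) * (-t - 0)^j / j.factorial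
            = HH b x j 0 / j.factorial * t^j := by
          intro j
          have h11 : ((-1:ℝ)^j) * ((-1:ℝ)^j) = 1 := by
            rw [← pow_add]
            exact Even.neg_one_pow ⟨j, rfl⟩
          rw [neg_zero, sub_zero, show (-t:ℝ)^j = (-1)^j * t^j by rw [neg_pow]]
          linear_combination (t ^ j * HH b x j 0 / (j.factorial : ℝ)) * h11
        have h11 : ((-1:ℝ)^(K+1)) * ((-1:ℝ)^(K+1)) = 1 := by
          rw [← pow_add]
          exact Even.neg_one_pow ⟨K+1, rfl⟩
        have heq3 : HH b x 0 t - ∑ j ∈ Finset.range (K+1), HH b x j 0 / j.factorial * t^j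
            = HH b x (K+1) (-ξ) * t^(K+1) / (K+1).factorial := by
          have e0 : ((-1:ℝ))^0 * HH b x 0 (- -t) = HH b x 0 t := by simp
          rw [← Finset.sum_congr rfl (fun j _ => hsum j), ← e0, heq, sub_zero,
            show (-t:ℝ)^(K+1) = (-1)^(K+1) * t^(K+1) by rw [neg_pow]]
          congr 1
          linear_combination HH b x (K+1) (-ξ) * t^(K+1) * h11
        rw [heq3]
        have hξ1 : -ξ < 1 := by cases hξ; linarith
        have hmono : HH b x (K+1) (-ξ) ≤ HH b x (K+1) 0 := by
          have hm : MonotoneOn (HH b x (K+1)) (Set.Icc t 0) := by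
            refine monotoneOn_of_deriv_nonneg (convex_Icc t 0) ?_ ?_ ?_
            · intro s hs
              exact ((hasDerivAt_HH hb hb1 hx (K+1)
                (by cases hs; linarith : s < 1)).differentiableAt.continuousAt).continuousWithinAt
            · intro s hs
              rw [interior_Icc] at hs
              exact ((hasDerivAt_HH hb hb1 hx (K+1)
                (by cases hs; linarith : s < 1)).differentiableAt).differentiableWithinAt
            · intro s hs
              rw [interior_Icc] at hs
              rw [(hasDerivAt_HH hb hb1 hx (K+1) (by cases hs; linarith : s < 1)).deriv]
              exact (HH_pos hb hb1 hx (K+2) (by cases hs; linarith)).le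
          refine hm ⟨by cases hξ; linarith, by cases hξ; linarith⟩
            ⟨ht0.le, le_refl 0⟩ (by cases hξ; linarith)
        have hc := HH_term_le hb hb1 hx (u := 0) (v := r) (by norm_num) hr0 hr1 (K+1)
        rw [sub_zero] at hc
        have hHpos := HH_pos hb hb1 hx (K+1) hξ1
        rw [Real.norm_eq_abs, abs_div, abs_mul, abs_pow]
        rw [abs_of_pos hHpos, abs_of_pos (by positivity : (0:ℝ) < ((K+1).factorial:ℝ))]
        have e : HH b x (K+1) 0 * r^(K+1) / (K+1).factorial * (|t|/r)^(K+1)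
            = HH b x (K+1) 0 * |t|^(K+1) / (K+1).factorial := by
          clear_value r
          rw [div_pow]
          field_simp
        have step : HH b x (K+1) 0 * |t|^(K+1) / (K+1).factorial
            ≤ HH b x 0 r * (|t|/r)^(K+1) := by
          rw [← e]
          exact mul_le_mul_of_nonneg_right hc (by positivity)
        refine le_trans ?_ step
        gcongr
      · have hq : |t|/r < 1 := (div_lt_one hr0).mpr htr
        have hq0 : 0 ≤ |t|/r := by positivity
        have := (tendsto_pow_atTop_nhds_zero_of_lt_one hq0 hq).const_mul (HH b x 0 r)
        simp only [mul_zero] at this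
        exact ((tendsto_add_atTop_iff_nat 1).mpr this).congr (fun K => rfl)
    · -- t = 0
      subst ht0
      refine tendsto_const_nhds.congr' ?_
      filter_upwards [eventually_ge_atTop 0] with K _
      rw [Finset.sum_eq_single_of_mem 0 (Finset.mem_range.mpr (Nat.succ_pos K))
        (fun j _ hj => by simp [zero_pow hj])]
      simp
    · -- t > 0 : Cauchy remainder
      set r : ℝ := (1 + t)/2 with hrdef
      have hr1 : r < 1 := by cases ht; rw [hrdef]; linarith
      have htr : t < r := by cases ht; rw [hrdef]; linarith
      have hr0 : 0 < r := lt_trans ht0 htr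
      have hrt : 0 < r - t := by linarith
      have hq : t/r < 1 := (div_lt_one hr0).mpr htr
      have hconv : ∀ K : ℕ, HH b x 0 t - ∑ j ∈ Finset.range (K+1), HH b x j 0 * (t-0)^j / j.factorial
          = HH b x 0 t - ∑ j ∈ Finset.range (K+1), HH b x j 0 / j.factorial * t^j := by
        intro K
        congr 1
        exact Finset.sum_congr rfl fun j _ => by rw [sub_zero]; ring
      apply squeeze_zero (g := fun K : ℕ => (HH b x 0 r * t / (r-t)) * (((K:ℝ)+1) * (t/r)^K))
      · intro K
        obtain ⟨ξ, hξ, heq⟩ := taylor_chain_cauchy (a := (-2:ℝ)) (c := (1:ℝ))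
          (by norm_num) ht0 ht.2 (HH_chain hb hb1 hx) K
        rw [← hconv K, heq]
        have hH := HH_pos hb hb1 hx (K+1) (lt_trans hξ.2 ht.2)
        exact mul_nonneg (div_nonneg (mul_nonneg hH.le
          (pow_nonneg (by cases hξ; linarith) K)) (by positivity)) (by linarith)
      · intro K
        obtain ⟨ξ, hξ, heq⟩ := taylor_chain_cauchy (a := (-2:ℝ)) (c := (1:ℝ))
          (by norm_num) ht0 ht.2 (HH_chain hb hb1 hx) K
        rw [← hconv K, heq]
        obtain ⟨hξ0, hξt⟩ := hξ
        have hrξ : 0 < r - ξ := by linarith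
        have htξ : 0 ≤ t - ξ := by linarith
        have hH := HH_pos hb hb1 hx (K+1) (lt_trans hξt ht.2)
        have hH0r := HH_pos hb hb1 hx 0 hr1
        have hc := HH_term_le hb hb1 hx (u := ξ) (v := r) (by linarith) (by linarith) hr1 (K+1)
        have hA : HH b x (K+1) ξ ≤ (K+1).factorial * HH b x 0 r / (r-ξ)^(K+1) := by
          rw [le_div_iff₀ (by positivity)]
          have h5 := mul_le_mul_of_nonneg_right hc
            (by positivity : (0:ℝ) ≤ ((K+1).factorial : ℝ))
          calc HH b x (K+1) ξ * (r-ξ)^(K+1)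
              = HH b x (K+1) ξ * (r-ξ)^(K+1) / (K+1).factorial * (K+1).factorial := by
                field_simp
            _ ≤ HH b x 0 r * (K+1).factorial := h5
            _ = (K+1).factorial * HH b x 0 r := by ring
        have h3' : t - ξ ≤ (t/r) * (r-ξ) := by
          rw [div_mul_eq_mul_div, le_div_iff₀ hr0]
          nlinarith
        have hkey : (t-ξ)^K / (r-ξ)^(K+1) ≤ (t/r)^K / (r-t) := by
          rw [div_le_div_iff₀ (by positivity) hrt]
          calc (t-ξ)^K * (r-t)
              ≤ ((t/r)*(r-ξ))^K * (r-ξ) :=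
                mul_le_mul (pow_le_pow_left₀ htξ h3' K) (by linarith) hrt.le (by positivity)
            _ = (t/r)^K * (r-ξ)^(K+1) := by rw [mul_pow]; ring
        calc HH b x (K+1) ξ * (t-ξ)^K / K.factorial * (t - 0)
            ≤ ((K+1).factorial * HH b x 0 r / (r-ξ)^(K+1)) * (t-ξ)^K / K.factorial * (t - 0) := by
              rw [sub_zero]
              gcongr
          _ = ((K+1) * HH b x 0 r * t) * ((t-ξ)^K / (r-ξ)^(K+1)) := by
              rw [sub_zero, Nat.factorial_succ]
              push_cast
              field_simp
          _ ≤ ((K+1) * HH b x 0 r * t) * ((t/r)^K / (r-t)) := by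
              have hnn : (0:ℝ) ≤ (K+1) * HH b x 0 r * t := by positivity
              exact mul_le_mul_of_nonneg_left hkey hnn
          _ = (HH b x 0 r * t / (r-t)) * ((K+1) * (t/r)^K) := by
              field_simp
      · have hq0 : (0:ℝ) < t/r := by positivity
        have h1 : Tendsto (fun K : ℕ => (K:ℝ) * (t/r)^K) atTop (𝓝 0) :=
          tendsto_self_mul_const_pow_of_lt_one hq0.le hq
        have h2 := (tendsto_add_atTop_iff_nat 1).mpr h1
        have h3 := h2.const_mul (r/t)
        simp only [mul_zero] at h3
        have h4 : Tendsto (fun K : ℕ => ((K:ℝ)+1) * (t/r)^K) atTop (𝓝 0) := by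
          refine h3.congr fun K => ?_
          clear_value r
          push_cast
          rw [div_pow, div_pow]
          field_simp
          ring
        have h5 := h4.const_mul (HH b x 0 r * t / (r-t))
        simpa using h5
  simpa using key.const_sub (HH b x 0 t)



def JJ (k m : ℕ) : ℝ := ∫ η in (0:ℝ)..(2*π), (Real.cos η)^k * Real.cos (m*η)

lemma JJ_zero_zero : JJ 0 0 = 2*π := by
  simp [JJ]

open intervalIntegral in
lemma JJ_zero_succ (m : ℕ) (hm : 1 ≤ m) : JJ 0 m = 0 := by
  have hm0 : (m:ℝ) ≠ 0 := Nat.cast_ne_zero.mpr (by omega)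
  simp only [JJ, pow_zero, one_mul]
  have := intervalIntegral.integral_comp_mul_left (a := (0:ℝ)) (b := 2*π)
    (f := fun y => Real.cos y) hm0
  rw [this]
  rw [integral_cos]
  have h1 : Real.sin ((m:ℝ) * (2*π)) = 0 := by
    have : (m:ℝ) * (2*π) = (2*m : ℕ) * π := by push_cast; ring
    rw [this, Real.sin_nat_mul_pi]
  simp [h1]

lemma cos_mul_cos_eq (a c : ℝ) : Real.cos a * Real.cos c
    = (Real.cos (a + c) + Real.cos (a - c)) / 2 := by
  rw [Real.cos_add, Real.cos_sub]; ring

lemma JJ_integrable (k m : ℕ) :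
    IntervalIntegrable (fun η => (Real.cos η)^k * Real.cos (m*η)) volume 0 (2*π) :=
  (Continuous.intervalIntegrable (by continuity) _ _)

lemma JJ_succ (k m : ℕ) (hm : 1 ≤ m) :
    JJ (k+1) m = (JJ k (m+1) + JJ k (m-1)) / 2 := by
  have key : ∀ η : ℝ, (Real.cos η)^(k+1) * Real.cos (m*η)
      = ((Real.cos η)^k * Real.cos ((m+1:ℕ)*η) + (Real.cos η)^k * Real.cos ((m-1:ℕ)*η)) / 2 := by
    intro η
    have h1 : Real.cos η * Real.cos (m*η)
        = (Real.cos ((m+1:ℕ)*η) + Real.cos ((m-1:ℕ)*η)) / 2 := by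
      rw [cos_mul_cos_eq]
      have e1 : (η + m*η) = ((m+1:ℕ):ℝ)*η := by push_cast; ring
      have e2 : (η - m*η) = -(((m-1:ℕ):ℝ)*η) := by
        have : ((m-1:ℕ):ℝ) = (m:ℝ) - 1 := by
          have : 1 ≤ m := hm
          push_cast [this]
          ring
        rw [this]; ring
      rw [e1, e2, Real.cos_neg]
    calc (Real.cos η)^(k+1) * Real.cos (m*η)
        = (Real.cos η)^k * (Real.cos η * Real.cos (m*η)) := by ring
      _ = _ := by rw [h1]; ring
  unfold JJ
  rw [intervalIntegral.integral_congr (g := fun η => ((Real.cos η)^k * Real.cos ((m+1:ℕ)*η)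
      + (Real.cos η)^k * Real.cos ((m-1:ℕ)*η)) / 2) (fun η _ => key η)]
  rw [intervalIntegral.integral_div, intervalIntegral.integral_add (JJ_integrable k (m+1)) (JJ_integrable k (m-1))]

lemma JJ_succ_zero (k : ℕ) : JJ (k+1) 0 = JJ k 1 := by
  unfold JJ
  refine intervalIntegral.integral_congr fun η _ => ?_
  simp [pow_succ]



lemma JJ_nonneg : ∀ k m, 0 ≤ JJ k m := by
  intro k
  induction k with
  | zero =>
    intro m
    cases m with
    | zero => rw [JJ_zero_zero]; positivity
    | succ m => rw [JJ_zero_succ _ (Nat.succ_le_succ (Nat.zero_le m))]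
  | succ k ih =>
    intro m
    rcases Nat.eq_zero_or_pos m with h|h
    · subst h; rw [JJ_succ_zero]; exact ih 1
    · rw [JJ_succ k m h]; linarith [ih (m+1), ih (m-1)]

lemma JJ_vanish : ∀ k m, k < m → JJ k m = 0 := by
  intro k
  induction k with
  | zero => intro m hm; exact JJ_zero_succ m hm
  | succ k ih =>
    intro m hm
    have hm1 : 1 ≤ m := by omega
    rw [JJ_succ k m hm1, ih (m+1) (by omega), ih (m-1) (by omega)]
    norm_num

lemma JJ_diag : ∀ k, JJ k k = 2*π / 2^k := by
  intro k
  induction k with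
  | zero => rw [JJ_zero_zero]; norm_num
  | succ k ih =>
    rw [JJ_succ k (k+1) (by omega), JJ_vanish k (k+1+1) (by omega)]
    have : k + 1 - 1 = k := by omega
    rw [this, ih]
    rw [pow_succ]
    field_simp
    ring


lemma HH_le_one {b x v : ℝ} (hx : 0 < x) : HH b x 0 v ≤ 1 := by
  have : HH b x 0 v = Real.exp (-x * SS b v) := by
    simp [HH, QQ]
  rw [this, Real.exp_le_one_iff]
  have h1 : 0 ≤ SS b v := Real.sqrt_nonneg _
  nlinarith

lemma cc_partial {b x : ℝ} (hb : 0 < b) (hb1 : b ≤ 1) (hx : 0 < x) (K : ℕ) :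
    ∑ j ∈ Finset.range K, HH b x j 0 / j.factorial ≤ 1 := by
  cases K with
  | zero => simp
  | succ K =>
    have hcont : Continuous (fun r : ℝ =>
        ∑ j ∈ Finset.range (K+1), HH b x j 0 / j.factorial * r^j) := by
      refine continuous_finset_sum _ fun j _ => ?_
      exact continuous_const.mul (continuous_pow j)
    have hlim : Tendsto (fun r : ℝ => ∑ j ∈ Finset.range (K+1), HH b x j 0 / j.factorial * r^j)
        (𝓝[<] (1:ℝ)) (𝓝 (∑ j ∈ Finset.range (K+1), HH b x j 0 / j.factorial)) := by
      have h2 := hcont.tendsto 1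
      simp only [one_pow, mul_one] at h2
      exact h2.mono_left nhdsWithin_le_nhds
    refine le_of_tendsto hlim ?_
    filter_upwards [Ioo_mem_nhdsLT_of_mem (show (1:ℝ) ∈ Set.Ioc 0 1 by norm_num)] with r hr
    have h1 := HH_taylor_le hb hb1 hx (u := 0) (v := r) (by norm_num) hr.1 hr.2 K
    calc ∑ j ∈ Finset.range (K+1), HH b x j 0 / j.factorial * r^j
        = ∑ j ∈ Finset.range (K+1), HH b x j 0 * (r-0)^j / j.factorial :=
          Finset.sum_congr rfl fun j _ => by rw [sub_zero]; ring
      _ ≤ HH b x 0 r := h1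
      _ ≤ 1 := HH_le_one hx

/-- For every integer `n ≥ 1`, every `b ∈ (0,1]` and every `x > 0`, the function `φ_{n,b}`
is strictly positive and satisfies `0 < φ_{n,b}(x) ≤ 2π·e^{−(1−b)x}`. -/
theorem positivity_and_bound_of_phib (n : ℕ) (hn : 1 ≤ n) (b : ℝ) (hb : b ∈ Set.Ioc (0:ℝ) 1)
    (x : ℝ) (hx : 0 < x) :
    0 < phib n b x ∧ phib n b x ≤ 2 * π * Real.exp (-(1-b)*x) := by
  obtain ⟨hb0, hb1⟩ := hb
  have hpi := Real.pi_pos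
  set f : ℝ → ℝ := fun η => Real.exp (-x * Real.sqrt (1 + b^2 - 2*b*Real.cos η)) * Real.cos (n*η)
    with hfdef
  have hfcont : Continuous f := by
    apply Continuous.mul
    · apply Real.continuous_exp.comp
      apply Continuous.mul continuous_const
      apply Real.continuous_sqrt.comp
      continuity
    · continuity
  constructor
  · -- positivity
    set c : ℕ → ℝ := fun j => HH b x j 0 / j.factorial with hcdef
    have hc_nonneg : ∀ j, 0 ≤ c j := fun j =>
      div_nonneg (HH_pos hb0 hb1 hx j one_pos).le (by positivity)
    set F : ℕ → ℝ → ℝ := fun K η =>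
      (∑ j ∈ Finset.range (K+1), c j * (Real.cos η)^j) * Real.cos (n*η) with hFdef
    have hFcont : ∀ K, Continuous (F K) := by
      intro K
      apply Continuous.mul
      · exact continuous_finset_sum _ fun j _ =>
          continuous_const.mul ((Real.continuous_cos).pow j)
      · continuity
    have hae : ∀ᵐ η : ℝ, Real.cos η ∈ Set.Ioo (-1:ℝ) 1 := by
      rw [ae_iff]
      refine measure_mono_null ?_ ((Set.countable_range (fun k : ℤ => (k:ℝ) * π)).measure_zero _)
      intro η hη
      simp only [Set.mem_setOf_eq, Set.mem_Ioo, not_and_or, not_lt] at hη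
      have hc1 : Real.cos η ≤ 1 := Real.cos_le_one η
      have hc2 : -1 ≤ Real.cos η := Real.neg_one_le_cos η
      have hs : Real.sin η = 0 := by
        have h3 := Real.sin_sq_add_cos_sq η
        have h4 : Real.cos η = 1 ∨ Real.cos η = -1 := by
          rcases hη with h|h
          · right; linarith
          · left; linarith
        have h5 : Real.sin η ^ 2 = 0 := by
          rcases h4 with h|h <;> rw [h] at h3 <;> nlinarith
        exact pow_eq_zero_iff (by norm_num) |>.mp h5
      rw [Real.sin_eq_zero_iff] at hs
      obtain ⟨k, hk⟩ := hs
      exact ⟨k, hk⟩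
    have hlim : Tendsto (fun K => ∫ η in (0:ℝ)..(2*π), F K η) atTop
        (𝓝 (∫ η in (0:ℝ)..(2*π), f η)) := by
      refine intervalIntegral.tendsto_integral_filter_of_dominated_convergence
        (bound := fun _ => (1:ℝ)) ?_ ?_ ?_ ?_
      · exact Eventually.of_forall fun K => (hFcont K).aestronglyMeasurable
      · refine Eventually.of_forall fun K => Eventually.of_forall fun η _ => ?_
        have h1 : |∑ j ∈ Finset.range (K+1), c j * (Real.cos η)^j|
            ≤ ∑ j ∈ Finset.range (K+1), c j := by
          refine le_trans (Finset.abs_sum_le_sum_abs _ _) ?_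
          refine Finset.sum_le_sum fun j _ => ?_
          rw [abs_mul, abs_of_nonneg (hc_nonneg j), abs_pow]
          calc c j * |Real.cos η|^j ≤ c j * 1^j := by
                refine mul_le_mul_of_nonneg_left (pow_le_pow_left₀ (abs_nonneg _)
                  (Real.abs_cos_le_one η) j) (hc_nonneg j)
            _ = c j := by rw [one_pow, mul_one]
        have h2 : ∑ j ∈ Finset.range (K+1), c j ≤ 1 := cc_partial hb0 hb1 hx (K+1)
        rw [Real.norm_eq_abs, hFdef]
        calc |(∑ j ∈ Finset.range (K+1), c j * (Real.cos η)^j) * Real.cos (n*η)|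
            = |∑ j ∈ Finset.range (K+1), c j * (Real.cos η)^j| * |Real.cos (n*η)| := abs_mul _ _
          _ ≤ 1 * 1 := by
              refine mul_le_mul (le_trans h1 h2) (Real.abs_cos_le_one _) (abs_nonneg _) one_pos.le
          _ = 1 := by norm_num
      · exact intervalIntegrable_const
      · refine (hae.mono fun η hη _ => ?_)
        have hser := HH_series hb0 hb1 hx hη
        have h3 : f η = HH b x 0 (Real.cos η) * Real.cos (n*η) := by
          simp [hfdef, HH, QQ, SS]
        rw [h3]
        exact hser.mul_const _
    have hFint : ∀ K, ∫ η in (0:ℝ)..(2*π), F K η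
        = ∑ j ∈ Finset.range (K+1), c j * JJ j n := by
      intro K
      have e1 : ∀ η : ℝ, F K η = ∑ j ∈ Finset.range (K+1),
          c j * ((Real.cos η)^j * Real.cos (n*η)) := by
        intro η
        show (∑ j ∈ Finset.range (K+1), c j * (Real.cos η)^j) * Real.cos (n*η) = _
        rw [Finset.sum_mul]
        exact Finset.sum_congr rfl fun j _ => by ring
      rw [intervalIntegral.integral_congr (fun η _ => e1 η)]
      rw [intervalIntegral.integral_finset_sum (fun j _ =>
        (JJ_integrable j n).const_mul (c j))]
      exact Finset.sum_congr rfl fun j _ => by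
        rw [intervalIntegral.integral_const_mul]; rfl
    have hphib : phib n b x = ∫ η in (0:ℝ)..(2*π), f η := rfl
    have hlow : c n * JJ n n ≤ phib n b x := by
      rw [hphib]
      refine ge_of_tendsto hlim ?_
      filter_upwards [eventually_ge_atTop n] with K hK
      rw [hFint K]
      refine Finset.single_le_sum (f := fun j => c j * JJ j n) (fun j _ =>
        mul_nonneg (hc_nonneg j) (JJ_nonneg j n)) (Finset.mem_range.mpr (by omega))
    have hpos : 0 < c n * JJ n n := by
      refine mul_pos (div_pos (HH_pos hb0 hb1 hx n one_pos) (by positivity)) ?_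
      rw [JJ_diag n]
      positivity
    linarith
  · -- upper bound
    have hb' : ∀ η ∈ Set.Icc (0:ℝ) (2*π), f η ≤ Real.exp (-(1-b)*x) := by
      intro η _
      have h1 : (1-b) ≤ Real.sqrt (1 + b^2 - 2*b*Real.cos η) := by
        have hcos := Real.cos_le_one η
        have h2 : (1-b)^2 ≤ 1 + b^2 - 2*b*Real.cos η := by nlinarith
        calc (1-b) ≤ Real.sqrt ((1-b)^2) := by
              rw [Real.sqrt_sq (by linarith)]
          _ ≤ _ := Real.sqrt_le_sqrt h2
      have h3 : Real.exp (-x * Real.sqrt (1 + b^2 - 2*b*Real.cos η))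
          ≤ Real.exp (-(1-b)*x) := by
        apply Real.exp_le_exp.mpr
        nlinarith
      calc f η ≤ Real.exp (-x * Real.sqrt (1 + b^2 - 2*b*Real.cos η)) * 1 := by
            refine mul_le_mul_of_nonneg_left ?_ (Real.exp_pos _).le
            exact Real.cos_le_one _
        _ = Real.exp (-x * Real.sqrt (1 + b^2 - 2*b*Real.cos η)) := mul_one _
        _ ≤ Real.exp (-(1-b)*x) := h3
    have hint : phib n b x ≤ ∫ _ in (0:ℝ)..(2*π), Real.exp (-(1-b)*x) := by
      refine intervalIntegral.integral_mono_on (by positivity)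
        (hfcont.intervalIntegrable _ _) intervalIntegrable_const hb'
    rw [intervalIntegral.integral_const] at hint
    calc phib n b x ≤ (2*π - 0) • Real.exp (-(1-b)*x) := hint
      _ = 2 * π * Real.exp (-(1-b)*x) := by rw [smul_eq_mul]; ring

end DCV5
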